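/- Let m = n + k, let L ∈ ℂ^{m×m} be a unitary, proper k-lower Hessenberg matrix, and let Q = diag(I_k, Q̂) where Q̂ ∈ ℂ^{n×n} is a unitary upper Hessenberg matrix. Set C = L Q. Then for every h with 2 ≤ h ≤ n + 1, the submatrix C(h:m, 1:h+k−2) has rank exactly k. -/

import Mathlib

set_option maxRecDepth 4000
set_option maxHeartbeats 1000000


open Matrix

/-- `M` is `k`-upper Hessenberg: `m_{ij} = 0` whenever `i > j + k`. -/
def kUpperHessenberg (k : ℕ) {m : ℕ} (M : Matrix (Fin m) (Fin m) ℂ) : Prop :=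
  ∀ i j : Fin m, j.1 + k < i.1 → M i j = 0

/-- `M` is `k`-lower Hessenberg: `m_{ij} = 0` whenever `j > i + k`. -/
def kLowerHessenberg (k : ℕ) {m : ℕ} (M : Matrix (Fin m) (Fin m) ℂ) : Prop :=
  ∀ i j : Fin m, i.1 + k < j.1 → M i j = 0

/-- A `k`-upper Hessenberg matrix is proper: the outermost entries `h_{j+k,j}` are
all nonzero. -/
def ProperUpper (k : ℕ) {m : ℕ} (M : Matrix (Fin m) (Fin m) ℂ) : Prop :=
  ∀ i j : Fin m, i.1 = j.1 + k → M i j ≠ 0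

/-- A `k`-lower Hessenberg matrix is proper: the outermost entries `h_{j,j+k}` are
all nonzero. -/
def ProperLower (k : ℕ) {m : ℕ} (M : Matrix (Fin m) (Fin m) ℂ) : Prop :=
  ∀ i j : Fin m, j.1 = i.1 + k → M i j ≠ 0

/-- The block diagonal matrix `diag(I_k, Q̂)` for `Q̂ ∈ ℂ^{n×n}`. -/
def diagIQ (n k : ℕ) (Qh : Matrix (Fin n) (Fin n) ℂ) :
    Matrix (Fin (n + k)) (Fin (n + k)) ℂ :=
  Matrix.of fun x y =>
    if h : k ≤ x.1 ∧ k ≤ y.1 then Qh ⟨x.1 - k, by omega⟩ ⟨y.1 - k, by omega⟩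
    else if x.1 = y.1 then 1 else 0

open Finset in
lemma tri_aux (N : ℕ) (g : ℕ → ℕ → ℂ) (f : ℕ → ℂ)
    (hdiag : ∀ i, i < N → g i i ≠ 0)
    (hlow : ∀ i j, i < N → j < i → g i j = 0)
    (heq : ∀ i, i < N → ∑ j ∈ Finset.range N, g i j * f j = 0) :
    ∀ j, j < N → f j = 0 := by
  have key : ∀ d j, j < N → N - j ≤ d → f j = 0 := by
    intro d
    induction d with
    | zero => intro j hj hd; omega
    | succ d ih =>
      intro j hj hd
      have h1 : ∑ j' ∈ Finset.range N, g j j' * f j' = g j j * f j := by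
        apply Finset.sum_eq_single
        · intro b hb hne
          rcases Nat.lt_or_ge b j with hlt | hge
          · rw [hlow j b hj hlt, zero_mul]
          · rw [ih b (Finset.mem_range.mp hb) (by omega), mul_zero]
        · intro hj'; exact absurd (Finset.mem_range.mpr hj) hj'
      have h2 := heq j hj
      rw [h1] at h2
      exact (mul_eq_zero.mp h2).resolve_left (hdiag j hj)
  intro j hj; exact key (N - j) j hj le_rfl


/-- **Quasiseparable structure of `C = L Q`.**
Let `m = n + k`, let `L ∈ ℂ^{m×m}` be a unitary, proper `k`-lower Hessenberg matrix
and let `Q = diag(I_k, Q̂)` with `Q̂ ∈ ℂ^{n×n}` unitary upper Hessenberg. Then for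
every `2 ≤ h ≤ n + 1` the submatrix `C(h:m, 1:h+k−2)` of `C = L Q` has rank
exactly `k`. -/
theorem LQ_lower_rank (n k : ℕ)
    (L : Matrix (Fin (n + k)) (Fin (n + k)) ℂ)
    (hLu : L ∈ Matrix.unitaryGroup (Fin (n + k)) ℂ)
    (hLH : kLowerHessenberg k L) (hLp : ProperLower k L)
    (Qh : Matrix (Fin n) (Fin n) ℂ)
    (hQu : Qh ∈ Matrix.unitaryGroup (Fin n) ℂ)
    (hQH : kUpperHessenberg 1 Qh)
    (h : ℕ) (hh1 : 2 ≤ h) (hh2 : h ≤ n + 1) :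
    (Matrix.of fun (a : Fin (n + k + 1 - h)) (b : Fin (h + k - 2)) =>
        (L * diagIQ n k Qh) ⟨h - 1 + a.1, by omega⟩ ⟨b.1, by omega⟩).rank = k := by
  classical
  have hLLs : L * Lᴴ = 1 := by
    rw [← Matrix.star_eq_conjTranspose]; exact Matrix.mem_unitaryGroup_iff.mp hLu
  have hLsL : Lᴴ * L = 1 := by
    rw [← Matrix.star_eq_conjTranspose]; exact Matrix.mem_unitaryGroup_iff'.mp hLu
  have horth1 : ∀ i j : Fin (n+k),
      ∑ x : Fin (n+k), L i x * star (L j x) = if i = j then 1 else 0 := by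
    intro i j
    have h0 := Matrix.ext_iff.mpr hLLs i j
    rw [Matrix.mul_apply] at h0
    simp only [Matrix.conjTranspose_apply, Matrix.one_apply] at h0
    exact h0
  have horth2 : ∀ i j : Fin (n+k),
      ∑ x : Fin (n+k), star (L x i) * L x j = if i = j then 1 else 0 := by
    intro i j
    have h0 := Matrix.ext_iff.mpr hLsL i j
    rw [Matrix.mul_apply] at h0
    simp only [Matrix.conjTranspose_apply, Matrix.one_apply] at h0
    exact h0
  have hQhess : ∀ x y : Fin (n+k), y.1 + 1 < x.1 → diagIQ n k Qh x y = 0 := by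
    intro x y hxy
    simp only [diagIQ, Matrix.of_apply]
    split_ifs with h1 h2
    · exact hQH _ _ (show y.1 - k + 1 < x.1 - k by omega)
    · omega
    · rfl
  have hQid : ∀ (x j : Fin (n+k)), j.1 < k →
      diagIQ n k Qh x j = if x = j then 1 else 0 := by
    intro x j hj
    simp only [diagIQ, Matrix.of_apply]
    rw [dif_neg (by omega)]
    simp [Fin.ext_iff]
  -- the submatrix
  set M : Matrix (Fin (n + k + 1 - h)) (Fin (h + k - 2)) ℂ :=
    Matrix.of fun (a : Fin (n + k + 1 - h)) (b : Fin (h + k - 2)) =>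
        (L * diagIQ n k Qh) ⟨h - 1 + a.1, by omega⟩ ⟨b.1, by omega⟩ with hM
  -- factor blocks
  set A : Matrix (Fin (n+k+1-h)) (Fin (h+k-1)) ℂ :=
    Matrix.of fun a x => L ⟨h-1+a.1, by omega⟩ ⟨x.1, by omega⟩ with hA
  set B : Matrix (Fin (h+k-1)) (Fin (h+k-2)) ℂ :=
    Matrix.of fun x b => diagIQ n k Qh ⟨x.1, by omega⟩ ⟨b.1, by omega⟩ with hB
  have hfact : M = A * B := by
    ext a b
    rw [hM, hA, hB]
    simp only [Matrix.of_apply, Matrix.mul_apply]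
    have e1 : ∑ x : Fin (n+k), L ⟨h-1+a.1, by omega⟩ x * diagIQ n k Qh x ⟨b.1, by omega⟩
        = ∑ i ∈ Finset.range (n+k), (fun i => if hi : i < n+k then
            L ⟨h-1+a.1, by omega⟩ ⟨i, hi⟩ * diagIQ n k Qh ⟨i, hi⟩ ⟨b.1, by omega⟩ else 0) i := by
      rw [← Fin.sum_univ_eq_sum_range]
      exact Finset.sum_congr rfl fun x _ => by rw [dif_pos x.2]
    have e2 : ∑ x : Fin (h+k-1),
          L ⟨h-1+a.1, by omega⟩ ⟨x.1, by omega⟩ * diagIQ n k Qh ⟨x.1, by omega⟩ ⟨b.1, by omega⟩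
        = ∑ i ∈ Finset.range (h+k-1), (fun i => if hi : i < n+k then
            L ⟨h-1+a.1, by omega⟩ ⟨i, hi⟩ * diagIQ n k Qh ⟨i, hi⟩ ⟨b.1, by omega⟩ else 0) i := by
      rw [← Fin.sum_univ_eq_sum_range]
      exact Finset.sum_congr rfl fun x _ => by rw [dif_pos (show x.1 < n+k by omega)]
    rw [e1, e2]
    refine (Finset.sum_subset (Finset.range_subset_range.mpr (by omega)) ?_).symm
    intro i hi hni
    simp only [Finset.mem_range] at hi hni
    rw [dif_pos hi]
    rw [hQhess _ _ (show b.1 + 1 < i by omega), mul_zero]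
  -- upper bound
  have hrankA : A.rank ≤ k := by
    have hrn := LinearMap.finrank_range_add_finrank_ker A.mulVecLin
    rw [Module.finrank_fin_fun] at hrn
    set w : Fin (h-1) → (Fin (h+k-1) → ℂ) :=
      fun i x => star (L ⟨i.1, by omega⟩ ⟨x.1, by omega⟩) with hw
    have hwker : ∀ i, A.mulVec (w i) = 0 := by
      intro i
      funext a
      simp only [Matrix.mulVec, dotProduct, Pi.zero_apply]
      have e2 : ∑ x : Fin (h+k-1), A a x * w i x
          = ∑ x ∈ Finset.range (h+k-1), (fun x' => if hx : x' < n+k then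
              L ⟨h-1+a.1, by omega⟩ ⟨x', hx⟩ * star (L ⟨i.1, by omega⟩ ⟨x', hx⟩) else 0) x := by
        rw [← Fin.sum_univ_eq_sum_range]
        refine Finset.sum_congr rfl fun x _ => ?_
        rw [dif_pos (show x.1 < n+k by omega)]
        rfl
      rw [e2]
      rw [Finset.sum_subset (Finset.range_subset_range.mpr (show h+k-1 ≤ n+k by omega))
        (by
          intro x hx hnx
          simp only [Finset.mem_range] at hx hnx
          rw [dif_pos hx]
          rw [hLH ⟨i.1, by omega⟩ ⟨x, hx⟩ (show (i.1:ℕ) + k < x by omega), star_zero, mul_zero])]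
      have e3 : ∑ x ∈ Finset.range (n+k), (fun x' => if hx : x' < n+k then
              L ⟨h-1+a.1, by omega⟩ ⟨x', hx⟩ * star (L ⟨i.1, by omega⟩ ⟨x', hx⟩) else 0) x
          = ∑ x : Fin (n+k), L ⟨h-1+a.1, by omega⟩ x * star (L ⟨i.1, by omega⟩ x) := by
        rw [← Fin.sum_univ_eq_sum_range]
        refine Finset.sum_congr rfl fun x _ => ?_
        rw [dif_pos x.2]
      rw [e3, horth1]
      rw [if_neg (by
        intro hcontra
        have := congrArg Fin.val hcontra
        simp only [Fin.val_mk] at this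
        omega)]
    have hwind : LinearIndependent ℂ w := by
      rw [Fintype.linearIndependent_iff]
      intro c hc i
      set g : ℕ → ℕ → ℂ := fun i0 j => if hcond : i0 + k < n + k ∧ j < n + k then
          star (L ⟨j, hcond.2⟩ ⟨i0+k, hcond.1⟩) else 1 with hg
      set f : ℕ → ℂ := fun j => if hj : j < h - 1 then c ⟨j, hj⟩ else 0 with hf
      have htri := tri_aux (h-1) g f
        (by
          intro i0 hi0
          simp only [hg]
          rw [dif_pos (show i0 + k < n + k ∧ i0 < n + k from ⟨by omega, by omega⟩)]
          simp only [star_ne_zero]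
          exact hLp ⟨i0, by omega⟩ ⟨i0+k, by omega⟩ rfl)
        (by
          intro i0 j hi0 hj
          simp only [hg]
          rw [dif_pos (show i0 + k < n + k ∧ j < n + k from ⟨by omega, by omega⟩)]
          rw [hLH ⟨j, by omega⟩ ⟨i0+k, by omega⟩ (show j + k < i0 + k by omega), star_zero])
        (by
          intro i0 hi0
          have hcx := congrFun hc (⟨i0+k, by omega⟩ : Fin (h+k-1))
          simp only [Finset.sum_apply, Pi.smul_apply, smul_eq_mul, Pi.zero_apply] at hcx
          have e4 : ∑ j ∈ Finset.range (h-1), g i0 j * f j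
              = ∑ j : Fin (h-1), c j • w j ⟨i0+k, by omega⟩ := by
            rw [← Fin.sum_univ_eq_sum_range]
            refine Finset.sum_congr rfl fun j _ => ?_
            rw [show g i0 ↑j = star (L ⟨(j:ℕ), by omega⟩ ⟨i0 + k, by omega⟩) from by
              simp only [hg]
              exact dif_pos ⟨by omega, by omega⟩]
            rw [show f ↑j = c j from by
              simp only [hf]
              rw [dif_pos j.2]]
            simp only [hw, smul_eq_mul]
            exact mul_comm _ _
          rw [e4]
          exact by simpa using hcx)
      have := htri i.1 i.2
      simp only [hf] at this
      rw [dif_pos i.2] at this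
      simpa using this
    have hker : h - 1 ≤ Module.finrank ℂ (LinearMap.ker A.mulVecLin) := by
      have hw' : LinearIndependent ℂ (fun i : Fin (h-1) =>
          (⟨w i, by rw [LinearMap.mem_ker, Matrix.mulVecLin_apply]; exact hwker i⟩ :
            LinearMap.ker A.mulVecLin)) :=
        LinearIndependent.of_comp (LinearMap.ker A.mulVecLin).subtype hwind
      simpa using hw'.fintype_card_le_finrank
    rw [Matrix.rank]
    omega
  have hub : M.rank ≤ k := hfact ▸ (Matrix.rank_mul_le_left A B).trans hrankA
  have hlb : k ≤ M.rank := by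
    have hcol : ∀ (a : Fin (n+k+1-h)) (j : Fin k),
        M a ⟨j.1, by omega⟩ = L ⟨h-1+a.1, by omega⟩ ⟨j.1, by omega⟩ := by
      intro a j
      rw [hM]
      simp only [Matrix.of_apply]
      rw [Matrix.mul_apply]
      have hsum : (∑ x : Fin (n+k), L ⟨h-1+a.1, by omega⟩ x * diagIQ n k Qh x ⟨j.1, by omega⟩)
          = L ⟨h-1+a.1, by omega⟩ ⟨j.1, by omega⟩ := by
        rw [Finset.sum_eq_single_of_mem (⟨j.1, by omega⟩ : Fin (n+k)) (Finset.mem_univ _)]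
        · rw [hQid _ _ j.2, if_pos rfl, mul_one]
        · intro x _ hne
          rw [hQid _ _ j.2, if_neg hne, mul_zero]
      exact hsum
    set u : Fin k → (Fin (n+k+1-h) → ℂ) := fun j a => M a ⟨j.1, by omega⟩ with hu
    have humem : ∀ j, u j ∈ LinearMap.range M.mulVecLin := by
      intro j
      refine ⟨Pi.single ⟨j.1, by omega⟩ 1, ?_⟩
      rw [Matrix.mulVecLin_apply, Matrix.mulVec_single]
      funext a
      simp only [hu, mul_one]
      simp [Matrix.col]
    have huind : LinearIndependent ℂ u := by
      rw [Fintype.linearIndependent_iff]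
      intro c hc j0
      have hvan : ∀ a : Fin (n+k+1-h),
          ∑ j : Fin k, c j * L ⟨h-1+a.1, by omega⟩ ⟨j.1, by omega⟩ = 0 := by
        intro a
        have hca := congrFun hc a
        simp only [Finset.sum_apply, Pi.smul_apply, smul_eq_mul, Pi.zero_apply] at hca
        rw [← hca]
        refine Finset.sum_congr rfl fun j _ => ?_
        simp only [hu]
        rw [hcol a j]
      have hvan' : ∀ (i : ℕ) (hi : i < n+k), h - 1 ≤ i →
          ∑ j : Fin k, c j * L ⟨i, hi⟩ ⟨j.1, by omega⟩ = 0 := by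
        intro i hi hige
        have h5 := hvan ⟨i - (h-1), by omega⟩
        have h6 : (⟨h - 1 + ((⟨i - (h-1), by omega⟩ : Fin (n+k+1-h)).1), by omega⟩ : Fin (n+k))
            = ⟨i, hi⟩ := Fin.ext (show h - 1 + (i - (h-1)) = i by omega)
        rw [h6] at h5
        exact h5
      set W : ℕ → ℂ := fun i => if hi : i < n + k then
          ∑ j : Fin k, c j * L ⟨i, hi⟩ ⟨j.1, by omega⟩ else 0 with hW
      have hWhigh : ∀ i : ℕ, h - 1 ≤ i → W i = 0 := by
        intro i hige
        simp only [hW]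
        by_cases hi : i < n + k
        · rw [dif_pos hi]; exact hvan' i hi hige
        · rw [dif_neg hi]
      have hWfin : ∀ x : Fin (n+k), W x.1 = ∑ j : Fin k, c j * L x ⟨j.1, by omega⟩ := by
        intro x
        simp only [hW]
        rw [dif_pos x.2]
      have hkey : ∀ y : Fin (n+k), (∑ x : Fin (n+k), star (L x y) * W x.1)
          = ∑ j : Fin k, c j * (if y = ⟨j.1, by omega⟩ then 1 else 0) := by
        intro y
        calc ∑ x : Fin (n+k), star (L x y) * W x.1
            = ∑ x : Fin (n+k), ∑ j : Fin k, star (L x y) * (c j * L x ⟨j.1, by omega⟩) := by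
              refine Finset.sum_congr rfl fun x _ => ?_
              rw [hWfin x, Finset.mul_sum]
          _ = ∑ j : Fin k, ∑ x : Fin (n+k), star (L x y) * (c j * L x ⟨j.1, by omega⟩) :=
              Finset.sum_comm
          _ = ∑ j : Fin k, c j * ∑ x : Fin (n+k), star (L x y) * L x ⟨j.1, by omega⟩ := by
              refine Finset.sum_congr rfl fun j _ => ?_
              rw [Finset.mul_sum]
              exact Finset.sum_congr rfl fun x _ => by ring
          _ = ∑ j : Fin k, c j * (if y = ⟨j.1, by omega⟩ then 1 else 0) := by
              refine Finset.sum_congr rfl fun j _ => ?_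
              rw [horth2]
      set g : ℕ → ℕ → ℂ := fun i0 i => if hcond : i0 + k < n + k ∧ i < n + k then
          star (L ⟨i, hcond.2⟩ ⟨i0+k, hcond.1⟩) else 1 with hg
      have htri := tri_aux (h-1) g W
        (by
          intro i0 hi0
          simp only [hg]
          rw [dif_pos (show i0 + k < n + k ∧ i0 < n + k from ⟨by omega, by omega⟩)]
          simp only [star_ne_zero]
          exact hLp ⟨i0, by omega⟩ ⟨i0+k, by omega⟩ rfl)
        (by
          intro i0 i hi0 hilt
          simp only [hg]
          rw [dif_pos (show i0 + k < n + k ∧ i < n + k from ⟨by omega, by omega⟩)]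
          rw [hLH ⟨i, by omega⟩ ⟨i0+k, by omega⟩ (show i + k < i0 + k by omega), star_zero])
        (by
          intro i0 hi0
          have e7 : ∑ i ∈ Finset.range (h-1), g i0 i * W i
              = ∑ i ∈ Finset.range (h-1), (fun i => if hi : i < n+k then
                  star (L ⟨i, hi⟩ ⟨i0+k, by omega⟩) * W i else 0) i := by
            refine Finset.sum_congr rfl fun i hi => ?_
            simp only [Finset.mem_range] at hi
            beta_reduce
            rw [dif_pos (show i < n + k by omega)]
            rw [show g i0 i = star (L ⟨i, by omega⟩ ⟨i0+k, by omega⟩) from by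
              simp only [hg]
              exact dif_pos ⟨by omega, by omega⟩]
          have e6 : ∑ i ∈ Finset.range (h-1), (fun i => if hi : i < n+k then
                  star (L ⟨i, hi⟩ ⟨i0+k, by omega⟩) * W i else 0) i
              = ∑ i ∈ Finset.range (n+k), (fun i => if hi : i < n+k then
                  star (L ⟨i, hi⟩ ⟨i0+k, by omega⟩) * W i else 0) i := by
            refine Finset.sum_subset (Finset.range_subset_range.mpr (by omega)) ?_
            intro i hi hni
            simp only [Finset.mem_range] at hi hni
            beta_reduce
            rw [dif_pos hi, hWhigh i (by omega), mul_zero]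
          have e5 : ∑ i ∈ Finset.range (n+k), (fun i => if hi : i < n+k then
                  star (L ⟨i, hi⟩ ⟨i0+k, by omega⟩) * W i else 0) i
              = ∑ x : Fin (n+k), star (L x ⟨i0+k, by omega⟩) * W x.1 := by
            rw [← Fin.sum_univ_eq_sum_range]
            refine Finset.sum_congr rfl fun x _ => ?_
            rw [dif_pos x.2]
          rw [e7, e6, e5, hkey]
          refine Finset.sum_eq_zero fun j _ => ?_
          rw [if_neg, mul_zero]
          intro hctr
          have := congrArg Fin.val hctr
          simp only [Fin.val_mk] at this
          omega)
      have hWzero : ∀ x : Fin (n+k), W x.1 = 0 := by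
        intro x
        by_cases hx : x.1 < h - 1
        · exact htri x.1 hx
        · exact hWhigh x.1 (by omega)
      have h8 := hkey ⟨j0.1, by omega⟩
      rw [Finset.sum_eq_zero (fun x _ => by rw [hWzero x, mul_zero])] at h8
      have h9 : ∑ j : Fin k, c j * (if (⟨j0.1, by omega⟩ : Fin (n+k)) = ⟨j.1, by omega⟩
            then 1 else 0) = c j0 := by
        rw [Finset.sum_eq_single_of_mem j0 (Finset.mem_univ _)]
        · rw [if_pos rfl, mul_one]
        · intro j _ hne
          have hneg : ¬ ((⟨j0.1, by omega⟩ : Fin (n+k)) = ⟨j.1, by omega⟩) := by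
            intro hctr
            apply hne
            apply Fin.ext
            have := congrArg Fin.val hctr
            simp only [Fin.val_mk] at this
            omega
          rw [if_neg hneg, mul_zero]
      rw [h9] at h8
      exact h8.symm
    have hu' : LinearIndependent ℂ (fun j : Fin k =>
        (⟨u j, humem j⟩ : LinearMap.range M.mulVecLin)) :=
      LinearIndependent.of_comp (LinearMap.range M.mulVecLin).subtype huind
    have h10 := hu'.fintype_card_le_finrank
    rw [Matrix.rank]
    simpa using h10
  omega
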